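/- Let (X,𝒜) be a measurable space, Θ a set equipped with a pseudometric w, and for each θ ∈ Θ let P_θ be a probability measure on X; write P^n_θ for the n-fold product measure on X^n. Let Σ₀, Σ₁ ⊆ Θ and for ρ > 0 set Σ₁(ρ) := {θ ∈ Σ₁ : inf_{θ₀∈Σ₀} w(θ,θ₀) ≥ ρ}. Suppose there are ρ*_n > 0 and β > 0 such that for every sequence ρ_n with ρ_n/ρ*_n → 0: liminf_n inf_{Ψ_n} [ sup_{θ∈Σ₀} E_{P^n_θ}[Ψ_n] + sup_{θ∈Σ₁(ρ_n)} E_{P^n_θ}[1−Ψ_n] ] ≥ β, the infimum running over measurable tests Ψ_n : X^n → {0,1}. Let r̃_n(s), r̃_n(r) > 0 satisfy r̃_n(s)/ρ*_n → 0 and r̃_n(s)/r̃_n(r) → 0, let L > 0, and let α, α' > 0 with 0 < 2α + α' < β. Then for every sequence ρ_n with ρ_n/ρ*_n → 0 there exists no sequence of set-valued maps C_n : X^n → subsets of Θ — such that for every θ ∈ Θ the event {θ ∈ C_n}, the events {|C_n|_w > L r̃_n(r)} and {|C_n|_w > L r̃_n(s)}, and for every ρ > 0 the event {C_n ∩ Σ₁(ρ)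 ≠ ∅} are measurable, where |C_n|_w := sup_{θ,θ'∈C_n} w(θ,θ') — satisfying simultaneously: (i) liminf_n inf_{θ ∈ Σ₀ ∪ Σ₁(ρ_n)} P^n_θ(θ ∈ C_n) ≥ 1 − α; (ii) limsup_n sup_{θ ∈ Σ₁(ρ_n)} P^n_θ(|C_n|_w > L r̃_n(r)) ≤ α'; and (iii) limsup_n sup_{θ ∈ Σ₀} P^n_θ(|C_n|_w > L r̃_n(s)) ≤ α'. -/

import Mathlib

open MeasureTheory Filter
open scoped ENNReal

/-- The `w`-diameter of a subset of `Θ`, valued in `ℝ≥0∞`. -/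
noncomputable def wDiam {Θ : Type*} (w : Θ → Θ → ℝ) (C : Set Θ) : ℝ≥0∞ :=
  ⨆ a ∈ C, ⨆ b ∈ C, ENNReal.ofReal (w a b)

/-- The `ρ`-separated alternative `S₁(ρ) = {θ ∈ S₁ : inf_{θ₀∈S₀} w(θ,θ₀) ≥ ρ}`. -/
def sepSet {Θ : Type*} (w : Θ → Θ → ℝ) (S₀ S₁ : Set Θ) (ρ : ℝ) : Set Θ :=
  {θ ∈ S₁ | ∀ θ₀ ∈ S₀, ρ ≤ w θ θ₀}

set_option maxHeartbeats 1000000 in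
/-- abstract nonexistence of adaptive honest confidence sets (Lemma 3.2 of the
paper in decision-theoretic form).  If the minimax testing problem `S₀` vs `S₁(ρ_n)` has the
lower bound `β` along every separation sequence of smaller order than `ρ*_n`, and
`r̃_n(s) = o(ρ*_n)`, `r̃_n(s) = o(r̃_n(r))`, `0 < 2α + α' < β`, then for every `ρ_n = o(ρ*_n)`
there is no sequence of (suitably measurable) confidence sets `C_n` that is honest at level
`1−α` over `S₀ ∪ S₁(ρ_n)` and whose `w`-diameter shrinks at rate `L r̃_n(r)` on `S₁(ρ_n)`
and at rate `L r̃_n(s)` on `S₀`, with error probabilities at most `α'`. -/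
theorem stmt19 {X : Type*} [MeasurableSpace X] {Θ : Type*}
    (w : Θ → Θ → ℝ)
    (hw_self : ∀ θ, w θ θ = 0) (hw_nonneg : ∀ θ θ', 0 ≤ w θ θ')
    (hw_symm : ∀ θ θ', w θ θ' = w θ' θ)
    (hw_tri : ∀ a b c, w a c ≤ w a b + w b c)
    (P : Θ → Measure X) (hP : ∀ θ, IsProbabilityMeasure (P θ))
    (S₀ S₁ : Set Θ)
    (ρstar : ℕ → ℝ) (hρstar : ∀ n, 0 < ρstar n)
    (β : ℝ) (hβ : 0 < β)
    (htest : ∀ ρseq : ℕ → ℝ, (∀ n, 0 < ρseq n) →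
      Tendsto (fun n => ρseq n / ρstar n) atTop (nhds 0) →
      ENNReal.ofReal β ≤
        liminf (fun n : ℕ =>
          ⨅ Ψ : {Ψ : (Fin n → X) → Bool // Measurable Ψ},
            ((⨆ θ ∈ S₀,
                Measure.pi (fun _ : Fin n => P θ) {ω | Ψ.1 ω = true}) +
              ⨆ θ ∈ sepSet w S₀ S₁ (ρseq n),
                Measure.pi (fun _ : Fin n => P θ) {ω | Ψ.1 ω = false})) atTop)
    (rs rr : ℕ → ℝ) (hrs : ∀ n, 0 < rs n) (hrr : ∀ n, 0 < rr n)
    (hrsρ : Tendsto (fun n => rs n / ρstar n) atTop (nhds 0))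
    (hrsr : Tendsto (fun n => rs n / rr n) atTop (nhds 0))
    (L : ℝ) (hL : 0 < L)
    (α α' : ℝ) (hα : 0 < α) (hα' : 0 < α') (hαβ : 2 * α + α' < β)
    (ρseq : ℕ → ℝ) (hρ : ∀ n, 0 < ρseq n)
    (hρρ : Tendsto (fun n => ρseq n / ρstar n) atTop (nhds 0)) :
    ¬ ∃ C : (n : ℕ) → (Fin n → X) → Set Θ,
        (∀ (n : ℕ) (θ : Θ), MeasurableSet {ω : Fin n → X | θ ∈ C n ω}) ∧
        (∀ n : ℕ, MeasurableSet
          {ω : Fin n → X | ENNReal.ofReal (L * rr n) < wDiam w (C n ω)}) ∧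
        (∀ n : ℕ, MeasurableSet
          {ω : Fin n → X | ENNReal.ofReal (L * rs n) < wDiam w (C n ω)}) ∧
        (∀ (n : ℕ) (ρ : ℝ), 0 < ρ → MeasurableSet
          {ω : Fin n → X | (C n ω ∩ sepSet w S₀ S₁ ρ).Nonempty}) ∧
        (ENNReal.ofReal (1 - α) ≤
          liminf (fun n : ℕ =>
            ⨅ θ ∈ S₀ ∪ sepSet w S₀ S₁ (ρseq n),
              Measure.pi (fun _ : Fin n => P θ) {ω | θ ∈ C n ω}) atTop) ∧
        (limsup (fun n : ℕ =>
            ⨆ θ ∈ sepSet w S₀ S₁ (ρseq n),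
              Measure.pi (fun _ : Fin n => P θ)
                {ω | ENNReal.ofReal (L * rr n) < wDiam w (C n ω)}) atTop
          ≤ ENNReal.ofReal α') ∧
        (limsup (fun n : ℕ =>
            ⨆ θ ∈ S₀,
              Measure.pi (fun _ : Fin n => P θ)
                {ω | ENNReal.ofReal (L * rs n) < wDiam w (C n ω)}) atTop
          ≤ ENNReal.ofReal α') := by
  rintro ⟨C, hmemC, hdiamR, hdiamS, hnonempty, hcov, hR, hS⟩
  classical
  -- the intermediate separation sequence
  set ρ' : ℕ → ℝ := fun n => max (ρseq n) (2 * L * rs n) with hρ'def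
  have hρ'pos : ∀ n, 0 < ρ' n := fun n => lt_of_lt_of_le (hρ n) (le_max_left _ _)
  have hρ'ge : ∀ n, ρseq n ≤ ρ' n := fun n => le_max_left _ _
  have hρ'gt : ∀ n, L * rs n < ρ' n := fun n => by
    have h1 : L * rs n < 2 * L * rs n := by nlinarith [hL, hrs n]
    exact lt_of_lt_of_le h1 (le_max_right _ _)
  have hρ'tend : Tendsto (fun n => ρ' n / ρstar n) atTop (nhds 0) := by
    have h1 : Tendsto (fun n => 2 * L * (rs n / ρstar n)) atTop (nhds 0) := by
      simpa using hrsρ.const_mul (2 * L)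
    have h2 := hρρ.max h1
    simp only [max_self] at h2
    refine h2.congr fun n => ?_
    simp only [hρ'def]
    rw [← mul_div_assoc]
    exact max_div_div_right (hρstar n).le _ _
  -- the test
  set Ψ : ∀ n : ℕ, (Fin n → X) → Bool :=
    fun n ω => decide (C n ω ∩ sepSet w S₀ S₁ (ρ' n)).Nonempty with hΨdef
  have hΨev : ∀ n, {ω : Fin n → X | Ψ n ω = true}
      = {ω : Fin n → X | (C n ω ∩ sepSet w S₀ S₁ (ρ' n)).Nonempty} := by
    intro n; ext ω; simp [hΨdef]
  have hΨmeas : ∀ n, Measurable (Ψ n) := by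
    intro n
    apply measurable_to_countable'
    intro b
    cases b
    · have : (Ψ n) ⁻¹' {false} = {ω : Fin n → X | Ψ n ω = true}ᶜ := by
        ext ω; simp [Set.mem_preimage]
      rw [this, hΨev n]
      exact (hnonempty n (ρ' n) (hρ'pos n)).compl
    · have : (Ψ n) ⁻¹' {true} = {ω : Fin n → X | Ψ n ω = true} := rfl
      rw [this, hΨev n]
      exact hnonempty n (ρ' n) (hρ'pos n)
  haveI : ∀ (n : ℕ) (θ : Θ), IsProbabilityMeasure (Measure.pi fun _ : Fin n => P θ) :=
    fun n θ => by haveI := hP θ; infer_instance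
  -- notation
  set μ : ∀ (n : ℕ), Θ → Measure (Fin n → X) :=
    fun n θ => Measure.pi (fun _ : Fin n => P θ) with hμdef
  set cov : ℕ → ℝ≥0∞ := fun n =>
    ⨅ θ ∈ S₀ ∪ sepSet w S₀ S₁ (ρseq n), μ n θ {ω | θ ∈ C n ω} with hcovdef
  -- pointwise bound on the type I error
  have herr0 : ∀ n, (⨆ θ ∈ S₀, μ n θ {ω | Ψ n ω = true})
      ≤ (1 - cov n) + ⨆ θ ∈ S₀, μ n θ {ω | ENNReal.ofReal (L * rs n) < wDiam w (C n ω)} := by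
    intro n
    refine iSup₂_le fun θ hθ => ?_
    have hsub : {ω : Fin n → X | Ψ n ω = true}
        ⊆ {ω | θ ∈ C n ω}ᶜ ∪ {ω | ENNReal.ofReal (L * rs n) < wDiam w (C n ω)} := by
      intro ω hω
      by_contra hcon
      rw [Set.mem_union, not_or] at hcon
      obtain ⟨hc1, hc2⟩ := hcon
      have hθC : θ ∈ C n ω := by simpa using hc1
      have hdle : wDiam w (C n ω) ≤ ENNReal.ofReal (L * rs n) := not_lt.1 hc2
      rw [hΨev n] at hω
      obtain ⟨θ', hθ'C, hθ'sep⟩ := hω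
      have h1 : ENNReal.ofReal (w θ' θ) ≤ wDiam w (C n ω) := by
        calc ENNReal.ofReal (w θ' θ) ≤ ⨆ b ∈ C n ω, ENNReal.ofReal (w θ' b) :=
              le_biSup (fun b => ENNReal.ofReal (w θ' b)) hθC
          _ ≤ wDiam w (C n ω) :=
              le_biSup (fun a => ⨆ b ∈ C n ω, ENNReal.ofReal (w a b)) hθ'C
      have h2 : w θ' θ ≤ L * rs n := by
        have := h1.trans hdle
        rwa [ENNReal.ofReal_le_ofReal_iff (mul_nonneg hL.le (hrs n).le)] at this
      have h3 : ρ' n ≤ w θ' θ := hθ'sep.2 θ hθ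
      have := hρ'gt n
      linarith
    calc μ n θ {ω | Ψ n ω = true}
        ≤ μ n θ ({ω | θ ∈ C n ω}ᶜ ∪ {ω | ENNReal.ofReal (L * rs n) < wDiam w (C n ω)}) :=
          measure_mono hsub
      _ ≤ μ n θ {ω | θ ∈ C n ω}ᶜ
            + μ n θ {ω | ENNReal.ofReal (L * rs n) < wDiam w (C n ω)} := measure_union_le _ _
      _ ≤ (1 - cov n)
            + ⨆ θ ∈ S₀, μ n θ {ω | ENNReal.ofReal (L * rs n) < wDiam w (C n ω)} := by
          refine add_le_add ?_ (le_biSup (fun θ => μ n θ {ω | ENNReal.ofReal (L * rs n) < wDiam w (C n ω)}) hθ)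
          rw [prob_compl_eq_one_sub (hmemC n θ)]
          exact tsub_le_tsub_left (iInf₂_le θ (Or.inl hθ)) (1 : ℝ≥0∞)
  -- pointwise bound on the type II error
  have herr1 : ∀ n, (⨆ θ ∈ sepSet w S₀ S₁ (ρ' n), μ n θ {ω | Ψ n ω = false})
      ≤ 1 - cov n := by
    intro n
    refine iSup₂_le fun θ hθ => ?_
    have hsub : {ω : Fin n → X | Ψ n ω = false} ⊆ {ω | θ ∈ C n ω}ᶜ := by
      intro ω hω
      simp only [Set.mem_compl_iff, Set.mem_setOf_eq]
      intro hθC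
      have : Ψ n ω = true := by
        simp only [hΨdef, decide_eq_true_eq]; exact ⟨θ, hθC, hθ⟩
      simp [this] at hω
    have hθ' : θ ∈ S₀ ∪ sepSet w S₀ S₁ (ρseq n) :=
      Or.inr ⟨hθ.1, fun θ₀ h₀ => le_trans (hρ'ge n) (hθ.2 θ₀ h₀)⟩
    calc μ n θ {ω | Ψ n ω = false} ≤ μ n θ {ω | θ ∈ C n ω}ᶜ := measure_mono hsub
      _ = 1 - μ n θ {ω | θ ∈ C n ω} := prob_compl_eq_one_sub (hmemC n θ)
      _ ≤ 1 - cov n := tsub_le_tsub_left (iInf₂_le θ hθ') (1 : ℝ≥0∞)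
  -- choose ε
  set ε : ℝ := (β - (2 * α + α')) / 4 with hεdef
  have hεpos : 0 < ε := by rw [hεdef]; linarith
  -- eventual bound on 1 - cov n
  have hB1 : ∀ᶠ n in atTop, (1 : ℝ≥0∞) - cov n ≤ ENNReal.ofReal (α + ε) := by
    rcases lt_or_ge α 1 with hα1 | hα1
    · set δ : ℝ := min ε ((1 - α) / 2) with hδdef
      have hδpos : 0 < δ := lt_min hεpos (by linarith)
      have hδ1 : 0 ≤ 1 - α - δ := by
        have : δ ≤ (1 - α) / 2 := min_le_right _ _
        linarith
      have hlt : ENNReal.ofReal (1 - α - δ) < liminf (fun n : ℕ => cov n) atTop := by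
        refine lt_of_lt_of_le ?_ hcov
        rw [ENNReal.ofReal_lt_ofReal_iff (by linarith)]
        linarith
      filter_upwards [eventually_lt_of_lt_liminf hlt] with n hn
      calc (1 : ℝ≥0∞) - cov n ≤ 1 - ENNReal.ofReal (1 - α - δ) :=
            tsub_le_tsub_left hn.le 1
        _ = ENNReal.ofReal (1 - (1 - α - δ)) := by
            rw [ENNReal.ofReal_sub _ hδ1, ENNReal.ofReal_one]
        _ ≤ ENNReal.ofReal (α + ε) := by
            apply ENNReal.ofReal_le_ofReal
            have : δ ≤ ε := min_le_left _ _
            linarith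
    · refine Eventually.of_forall fun n => ?_
      calc (1 : ℝ≥0∞) - cov n ≤ 1 := tsub_le_self
        _ = ENNReal.ofReal 1 := ENNReal.ofReal_one.symm
        _ ≤ ENNReal.ofReal (α + ε) := ENNReal.ofReal_le_ofReal (by linarith)
  -- eventual bound on the diameter overshoot on S₀
  have hB2 : ∀ᶠ n in atTop,
      (⨆ θ ∈ S₀, μ n θ {ω | ENNReal.ofReal (L * rs n) < wDiam w (C n ω)})
        ≤ ENNReal.ofReal (α' + ε) := by
    have hlt : limsup (fun n : ℕ =>
        ⨆ θ ∈ S₀, μ n θ {ω | ENNReal.ofReal (L * rs n) < wDiam w (C n ω)}) atTop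
        < ENNReal.ofReal (α' + ε) := by
      refine lt_of_le_of_lt hS ?_
      rw [ENNReal.ofReal_lt_ofReal_iff (by linarith)]
      linarith
    filter_upwards [eventually_lt_of_limsup_lt hlt] with n hn using hn.le
  -- the testing lower bound is contradicted
  have hkey := htest ρ' hρ'pos hρ'tend
  have hfinal : ∀ᶠ n in atTop,
      (⨅ Ψ' : {Ψ' : (Fin n → X) → Bool // Measurable Ψ'},
        ((⨆ θ ∈ S₀, μ n θ {ω | Ψ'.1 ω = true}) +
          ⨆ θ ∈ sepSet w S₀ S₁ (ρ' n), μ n θ {ω | Ψ'.1 ω = false}))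
        ≤ ENNReal.ofReal (2 * α + α' + 3 * ε) := by
    filter_upwards [hB1, hB2] with n h1 h2
    calc (⨅ Ψ' : {Ψ' : (Fin n → X) → Bool // Measurable Ψ'},
          ((⨆ θ ∈ S₀, μ n θ {ω | Ψ'.1 ω = true}) +
            ⨆ θ ∈ sepSet w S₀ S₁ (ρ' n), μ n θ {ω | Ψ'.1 ω = false}))
        ≤ (⨆ θ ∈ S₀, μ n θ {ω | Ψ n ω = true}) +
            ⨆ θ ∈ sepSet w S₀ S₁ (ρ' n), μ n θ {ω | Ψ n ω = false} :=
          iInf_le (fun Ψ' : {Ψ' : (Fin n → X) → Bool // Measurable Ψ'} =>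
            (⨆ θ ∈ S₀, μ n θ {ω | Ψ'.1 ω = true}) +
              ⨆ θ ∈ sepSet w S₀ S₁ (ρ' n), μ n θ {ω | Ψ'.1 ω = false}) ⟨Ψ n, hΨmeas n⟩
      _ ≤ ((1 - cov n)
              + ⨆ θ ∈ S₀, μ n θ {ω | ENNReal.ofReal (L * rs n) < wDiam w (C n ω)})
            + (1 - cov n) := add_le_add (herr0 n) (herr1 n)
      _ ≤ (ENNReal.ofReal (α + ε) + ENNReal.ofReal (α' + ε)) + ENNReal.ofReal (α + ε) :=
          add_le_add (add_le_add h1 h2) h1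
      _ = ENNReal.ofReal (2 * α + α' + 3 * ε) := by
          rw [← ENNReal.ofReal_add (by linarith) (by linarith),
            ← ENNReal.ofReal_add (by positivity) (by linarith)]
          ring_nf
  have hle : liminf (fun n : ℕ =>
      ⨅ Ψ' : {Ψ' : (Fin n → X) → Bool // Measurable Ψ'},
        ((⨆ θ ∈ S₀, μ n θ {ω | Ψ'.1 ω = true}) +
          ⨆ θ ∈ sepSet w S₀ S₁ (ρ' n), μ n θ {ω | Ψ'.1 ω = false})) atTop
      ≤ ENNReal.ofReal (2 * α + α' + 3 * ε) :=
    liminf_le_of_frequently_le' hfinal.frequently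
  have hcontra : ENNReal.ofReal β ≤ ENNReal.ofReal (2 * α + α' + 3 * ε) := le_trans hkey hle
  rw [ENNReal.ofReal_le_ofReal_iff (by positivity)] at hcontra
  rw [hεdef] at hcontra
  linarith
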